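/- For every k ≥ 1 and every vector of naturals v₀ such that v₀(d_i) = v₀(d′_i) = 0 for all i < k, the BVASS B_k has a (q^{init}_k, v₀)-rooted {q^{leaf}}-leaf-covering deduction tree if and only if v₀(d_k) ≥ tower(k). -/
import Mathlib


/-- An alternating branching VASS with full zero tests (ABVASS₀):
states `Q`, counters indexed by `ι`, with unary, fork, split, and
full-zero-test rules. -/
structure ABVASS (Q ι : Type) where
  Tu : Set (Q × (ι → ℤ) × Q)
  Tf : Set (Q × Q × Q)
  Ts : Set (Q × Q × Q)
  Tz : Set (Q × Q)

/-- Configurations: a state together with a vector of naturals. -/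
abbrev Config (Q ι : Type) := Q × (ι → ℕ)

/-- Finite deduction trees labelled by configurations, with unary and
binary internal nodes. -/
inductive DTree (Q ι : Type) where
  | leaf : Config Q ι → DTree Q ι
  | node1 : Config Q ι → DTree Q ι → DTree Q ι
  | node2 : Config Q ι → DTree Q ι → DTree Q ι → DTree Q ι

namespace DTree

variable {Q ι : Type}

/-- The root label of a deduction tree. -/
def root : DTree Q ι → Config Q ι
  | .leaf c => c
  | .node1 c _ => c
  | .node2 c _ _ => c

/-- Height: the maximum number of edges from the root to a leaf. -/
def height : DTree Q ι → ℕ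
  | .leaf _ => 0
  | .node1 _ t => t.height + 1
  | .node2 _ t₁ t₂ => max t₁.height t₂.height + 1

/-- The list of leaf labels. -/
def leaves : DTree Q ι → List (Config Q ι)
  | .leaf c => [c]
  | .node1 _ t => t.leaves
  | .node2 _ t₁ t₂ => t₁.leaves ++ t₂.leaves

end DTree

variable {Q ι : Type}

/-- Unary rule, applied top-down: from `(q, v)` derive `(q₁, v + u)`,
provided `v + u` is non-negative. -/
def UnaryStep (A : ABVASS Q ι) (c c' : Config Q ι) : Prop :=
  ∃ u, (c.1, u, c'.1) ∈ A.Tu ∧ ∀ i, (c'.2 i : ℤ) = (c.2 i : ℤ) + u i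

/-- Full zero test: from `(q, 0)` derive `(q₁, 0)`. -/
def ZeroStep (A : ABVASS Q ι) (c c' : Config Q ι) : Prop :=
  (c.1, c'.1) ∈ A.Tz ∧ c.2 = (fun _ => 0) ∧ c'.2 = (fun _ => 0)

/-- Fork (children copy the parent's vector) or split (the parent's
vector is a sum of the children's). -/
def BinStep (A : ABVASS Q ι) (c c₁ c₂ : Config Q ι) : Prop :=
  ((c.1, c₁.1, c₂.1) ∈ A.Tf ∧ c₁.2 = c.2 ∧ c₂.2 = c.2) ∨
  ((c.1, c₁.1, c₂.1) ∈ A.Ts ∧ c.2 = c₁.2 + c₂.2)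

/-- A tree is a valid deduction tree when every internal node's children
are obtained by one of the permitted steps. -/
inductive ValidTree (step1 : Config Q ι → Config Q ι → Prop)
    (step2 : Config Q ι → Config Q ι → Config Q ι → Prop) : DTree Q ι → Prop
  | leaf (c : Config Q ι) : ValidTree step1 step2 (.leaf c)
  | one {c : Config Q ι} {t : DTree Q ι} :
      step1 c t.root → ValidTree step1 step2 t → ValidTree step1 step2 (.node1 c t)
  | two {c : Config Q ι} {t₁ t₂ : DTree Q ι} :
      step2 c t₁.root t₂.root → ValidTree step1 step2 t₁ → ValidTree step1 step2 t₂ →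
      ValidTree step1 step2 (.node2 c t₁ t₂)

/-- Deduction trees of an ABVASS₀ (standard semantics). -/
def IsDeduction (A : ABVASS Q ι) : DTree Q ι → Prop :=
  ValidTree (fun c c' => UnaryStep A c c' ∨ ZeroStep A c c') (BinStep A)

/-- `tower 0 = 1`, `tower (n+1) = 2 ^ tower n`. -/
def tower : ℕ → ℕ
  | 0 => 1
  | n + 1 => 2 ^ tower n

/-- States of the BVASS hierarchy `B_k`. -/
inductive BSt where
  | qinit : ℕ → BSt
  | q1 : ℕ → BSt
  | q2 : ℕ → BSt
  | qloop : ℕ → BSt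
  | qleaf : BSt
deriving DecidableEq

/-- Counters: `Sum.inl i` is `d_i` and `Sum.inr i` is `d'_i` (for `i ≥ 1`). -/
abbrev Cnt := ℕ ⊕ ℕ

/-- The unit vector on counter `c`. -/
def e (c : Cnt) : Cnt → ℤ := fun c' => if c' = c then 1 else 0

/-- The BVASS `B_k`: `B_1` has the single unary rule
`qinit 1 →^{-2 e_{d_1}} qleaf`; for `2 ≤ j ≤ k` we add the unary rules
`qinit j →^{+e_{d_{j-1}}} q1 j`, `q1 j →^{-e_{d_{j-1}} + 2 e_{d'_{j-1}}} q1 j`,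
`q1 j →^0 q2 j`, `q2 j →^{-e_{d'_{j-1}} + e_{d_{j-1}}} q2 j`,
`qloop j →^0 qinit j`, `qloop j →^{-e_{d_j}} qinit (j-1)`, and the split
rule `q2 j → qloop j + qloop j`. -/
def Bsys (k : ℕ) : ABVASS BSt Cnt where
  Tu := {r | r = (BSt.qinit 1, -(2 • e (Sum.inl 1)), BSt.qleaf) ∨
    ∃ j, 2 ≤ j ∧ j ≤ k ∧
      (r = (BSt.qinit j, e (Sum.inl (j - 1)), BSt.q1 j) ∨
       r = (BSt.q1 j, -e (Sum.inl (j - 1)) + 2 • e (Sum.inr (j - 1)), BSt.q1 j) ∨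
       r = (BSt.q1 j, 0, BSt.q2 j) ∨
       r = (BSt.q2 j, -e (Sum.inr (j - 1)) + e (Sum.inl (j - 1)), BSt.q2 j) ∨
       r = (BSt.qloop j, 0, BSt.qinit j) ∨
       r = (BSt.qloop j, -e (Sum.inl j), BSt.qinit (j - 1)))}
  Tf := ∅
  Ts := {r | ∃ j, 2 ≤ j ∧ j ≤ k ∧ r = (BSt.q2 j, BSt.qloop j, BSt.qloop j)}
  Tz := ∅

/-! ### Auxiliary development -/

/-- `HasTree A c`: there is a `(c)`-rooted `{qleaf}`-leaf-covering deduction tree. -/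
inductive HT (A : ABVASS BSt Cnt) : Config BSt Cnt → Prop
  | leaf (v : Cnt → ℕ) : HT A (BSt.qleaf, v)
  | one {c c' : Config BSt Cnt} :
      (UnaryStep A c c' ∨ ZeroStep A c c') → HT A c' → HT A c
  | two {c c₁ c₂ : Config BSt Cnt} :
      BinStep A c c₁ c₂ → HT A c₁ → HT A c₂ → HT A c

lemma ht_iff_exists (A : ABVASS BSt Cnt) (c : Config BSt Cnt) :
    (∃ D : DTree BSt Cnt, IsDeduction A D ∧ D.root = c ∧
      ∀ l ∈ D.leaves, l.1 = BSt.qleaf) ↔ HT A c := by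
  constructor
  · rintro ⟨D, hD, hroot, hleaves⟩
    induction D generalizing c with
    | leaf c0 =>
      have h := hleaves c0 (by simp [DTree.leaves])
      have : c = (BSt.qleaf, c0.2) := by
        rw [← hroot]; simp [DTree.root]; exact Prod.ext h rfl
      rw [this]; exact HT.leaf _
    | node1 c0 t ih =>
      cases hD with
      | one hs ht =>
        have hr : c0 = c := hroot
        subst hr
        exact HT.one hs (ih t.root ht rfl (fun l hl => hleaves l (by simpa [DTree.leaves] using hl)))
    | node2 c0 t₁ t₂ ih₁ ih₂ =>
      cases hD with
      | two hs ht₁ ht₂ =>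
        have hr : c0 = c := hroot
        subst hr
        exact HT.two hs
          (ih₁ t₁.root ht₁ rfl (fun l hl => hleaves l (by simp [DTree.leaves]; exact Or.inl hl)))
          (ih₂ t₂.root ht₂ rfl (fun l hl => hleaves l (by simp [DTree.leaves]; exact Or.inr hl)))
  · intro h
    induction h with
    | leaf v => exact ⟨.leaf (BSt.qleaf, v), ValidTree.leaf _, rfl, by simp [DTree.leaves]⟩
    | one hs _ ih =>
      obtain ⟨D, hD, hroot, hl⟩ := ih
      exact ⟨.node1 _ D, ValidTree.one (by rwa [hroot]) hD, rfl, by simpa [DTree.leaves] using hl⟩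
    | two hs _ _ ih₁ ih₂ =>
      obtain ⟨D₁, hD₁, hroot₁, hl₁⟩ := ih₁
      obtain ⟨D₂, hD₂, hroot₂, hl₂⟩ := ih₂
      refine ⟨.node2 _ D₁ D₂, ValidTree.two (by rwa [hroot₁, hroot₂]) hD₁ hD₂, rfl, ?_⟩
      simp only [DTree.leaves, List.mem_append]
      rintro l (hl | hl)
      exacts [hl₁ l hl, hl₂ l hl]

/-! ### The potential functions -/

/-- `lf T x = 2^(T-x)` (truncated): budget needed by a branch of value `x`. -/
def lf (T x : ℕ) : ℕ := 2 ^ (T - x)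

/-- Budget needed at a split point with total value `c` (balanced split). -/
def Nf (T c : ℕ) : ℕ := lf T ((c + 1) / 2) + lf T (c / 2)

lemma lf_pos (T x : ℕ) : 1 ≤ lf T x := Nat.one_le_two_pow

lemma lf_antitone {T x y : ℕ} (h : x ≤ y) : lf T y ≤ lf T x :=
  Nat.pow_le_pow_right (by norm_num) (by omega)

lemma lf_of_ge {T x : ℕ} (h : T ≤ x) : lf T x = 1 := by
  simp [lf, Nat.sub_eq_zero_of_le h]

lemma lf_le_two_mul_succ (T x : ℕ) : lf T x ≤ 2 * lf T (x + 1) := by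
  rcases le_or_gt T x with h | h
  · rw [lf_of_ge h]
    have := lf_pos T (x + 1); omega
  · have : T - x = (T - (x + 1)) + 1 := by omega
    rw [lf, this, pow_succ, lf]; omega

lemma lf_exchange {T x y : ℕ} (h : x + 2 ≤ y) :
    lf T (x + 1) + lf T (y - 1) ≤ lf T x + lf T y := by
  rcases le_or_gt T (y - 1) with h1 | h1
  · rw [lf_of_ge h1, lf_of_ge (by omega : T ≤ y)]
    have := lf_antitone (T := T) (by omega : x ≤ x + 1); omega
  · -- y ≤ T
    have hy : y ≤ T := by omega
    have h2 : lf T (y - 1) = 2 * lf T y := by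
      have : T - (y - 1) = (T - y) + 1 := by omega
      rw [lf, this, pow_succ, lf]; omega
    have h3 : lf T x = 2 * lf T (x + 1) := by
      have : T - x = (T - (x + 1)) + 1 := by omega
      rw [lf, this, pow_succ, lf]; omega
    have h4 : lf T y ≤ lf T (x + 1) := lf_antitone (by omega)
    omega

/-- Convexity: the balanced split minimises total branch budget. -/
lemma Nf_le_add (T : ℕ) : ∀ x y : ℕ, Nf T (x + y) ≤ lf T x + lf T y := by
  suffices h : ∀ d x y : ℕ, y - x ≤ d → x ≤ y → Nf T (x + y) ≤ lf T x + lf T y by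
    intro x y
    rcases le_total x y with hxy | hxy
    · exact h _ x y le_rfl hxy
    · have := h (x - y) y x le_rfl hxy
      rw [Nat.add_comm y x] at this; omega
  intro d
  induction d with
  | zero =>
    intro x y hd hxy
    have hy : y = x := by omega
    rw [hy, Nf, show (x + x + 1) / 2 = x from by omega,
      show (x + x) / 2 = x from by omega]
  | succ d ih =>
    intro x y hd hxy
    rcases le_or_gt y (x + 1) with h1 | h1
    · obtain hy | hy : y = x ∨ y = x + 1 := by omega
      · rw [hy, Nf, show (x + x + 1) / 2 = x from by omega,
          show (x + x) / 2 = x from by omega]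
      · rw [hy, Nf, show (x + (x + 1) + 1) / 2 = x + 1 from by omega,
          show (x + (x + 1)) / 2 = x from by omega]
        omega
    · have h2 : x + 2 ≤ y := by omega
      have h3 : x + y = (x + 1) + (y - 1) := by omega
      have h4 := ih (x + 1) (y - 1) (by omega) (by omega)
      rw [h3] at *
      have := lf_exchange (T := T) h2
      omega

lemma Nf_antitone {T c c' : ℕ} (h : c ≤ c') : Nf T c' ≤ Nf T c := by
  have h1 : lf T ((c' + 1) / 2) ≤ lf T ((c + 1) / 2) := lf_antitone (by omega)
  have h2 : lf T (c' / 2) ≤ lf T (c / 2) := lf_antitone (by omega)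
  unfold Nf; omega

lemma Nf_two {T : ℕ} (hT : 1 ≤ T) : Nf T 2 = 2 ^ T := by
  show lf T 1 + lf T 1 = 2 ^ T
  rw [lf]
  have h : 2 ^ T = 2 ^ (T - 1) * 2 := by
    rw [← pow_succ]; congr 1; omega
  omega

/-- Restart bound: a restarting branch of value `a + b` needs at least `lf T (a+b)`. -/
lemma lf_le_Nf (T a b : ℕ) : lf T (a + b) ≤ Nf T (2 * a + b + 2) := by
  have h1 : lf T ((2 * a + b + 2 + 1) / 2) ≤ lf T ((2 * a + b + 2) / 2) :=
    lf_antitone (by omega)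
  have h2 : lf T (a + b + 1) ≤ lf T ((2 * a + b + 2 + 1) / 2) :=
    lf_antitone (by omega)
  have h3 := lf_le_two_mul_succ T (a + b)
  unfold Nf; omega

/-! ### The soundness invariant -/

/-- `Zb m v`: all counters of index `1 ≤ i < m` are zero. -/
def Zb (m : ℕ) (v : Cnt → ℕ) : Prop :=
  ∀ i, 1 ≤ i → i < m → v (Sum.inl i) = 0 ∧ v (Sum.inr i) = 0

lemma e_neg2_apply (c x : Cnt) : (-(2 • e c)) x = if x = c then -2 else 0 := by
  simp [e]; split <;> simp

lemma e_rule2_apply (c d x : Cnt) (h : c ≠ d) :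
    (-e c + 2 • e d) x = if x = c then -1 else if x = d then 2 else 0 := by
  simp [e]; split <;> split <;> simp_all

lemma e_rule4_apply (c d x : Cnt) (h : c ≠ d) :
    (-e c + e d) x = if x = c then -1 else if x = d then 1 else 0 := by
  simp [e]; split <;> split <;> simp_all

lemma e_neg_apply (c x : Cnt) : (-e c) x = if x = c then -1 else 0 := by
  simp [e]; split <;> simp

lemma e_apply (c x : Cnt) : (e c) x = if x = c then 1 else 0 := rfl

/-- The per-state invariant. -/
def P : BSt → (Cnt → ℕ) → Prop
  | .qleaf, _ => True
  | .qinit j, v =>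
      (j = 1 → 2 ≤ v (Sum.inl 1)) ∧
      (2 ≤ j → Zb (j - 1) v →
        Nf (tower (j - 1)) (2 * v (Sum.inl (j - 1)) + v (Sum.inr (j - 1)) + 2) ≤ v (Sum.inl j))
  | .q1 j, v => 2 ≤ j → Zb (j - 1) v →
      Nf (tower (j - 1)) (2 * v (Sum.inl (j - 1)) + v (Sum.inr (j - 1))) ≤ v (Sum.inl j)
  | .q2 j, v => 2 ≤ j → Zb (j - 1) v →
      Nf (tower (j - 1)) (v (Sum.inl (j - 1)) + v (Sum.inr (j - 1))) ≤ v (Sum.inl j)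
  | .qloop j, v => 2 ≤ j → Zb (j - 1) v →
      (Nf (tower (j - 1)) (2 * v (Sum.inl (j - 1)) + v (Sum.inr (j - 1)) + 2) ≤ v (Sum.inl j) ∨
       (1 ≤ v (Sum.inl j) ∧ tower (j - 1) ≤ v (Sum.inl (j - 1))))

lemma tower_pos (n : ℕ) : 1 ≤ tower n := by
  induction n with
  | zero => simp [tower]
  | succ n ih => exact Nat.one_le_two_pow

lemma sound {k : ℕ} : ∀ c : Config BSt Cnt, HT (Bsys k) c → P c.1 c.2 := by
  intro c h
  induction h with
  | leaf v => trivial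
  | @one c c' hs _ ih =>
    rcases hs with ⟨u, hmem, hv⟩ | ⟨hz, _⟩
    swap
    · simp [Bsys] at hz
    rcases hmem with hb | ⟨j, hj2, hjk, hr⟩
    · -- base rule qinit 1 → qleaf
      simp only [Prod.mk.injEq] at hb
      obtain ⟨hq, hu, hq'⟩ := hb
      rw [hq]
      refine ⟨fun _ => ?_, fun h2 => absurd h2 (by norm_num)⟩
      have h1 := hv (Sum.inl 1)
      rw [hu, e_neg2_apply] at h1
      simp at h1
      omega
    · have hab : (Sum.inl (j-1) : Cnt) ≠ Sum.inr (j-1) := by simp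
      have hat : (Sum.inl (j-1) : Cnt) ≠ Sum.inl j := by simp; omega
      have hbt : (Sum.inr (j-1) : Cnt) ≠ Sum.inl j := by simp
      rcases hr with h | h | h | h | h | h <;>
        simp only [Prod.mk.injEq] at h
      · -- qinit j → q1 j, u = e (inl (j-1))
        obtain ⟨hq, hu, hq'⟩ := h
        rw [hq]
        refine ⟨fun h1 => by omega, fun _ hZ => ?_⟩
        rw [hq'] at ih
        have hva : c'.2 (Sum.inl (j-1)) = c.2 (Sum.inl (j-1)) + 1 := by
          have h1 := hv (Sum.inl (j-1)); rw [hu, e_apply] at h1; simp at h1; omega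
        have hvo : ∀ x, x ≠ Sum.inl (j-1) → c'.2 x = c.2 x := by
          intro x hx
          have h1 := hv x; rw [hu, e_apply, if_neg hx] at h1; omega
        have hZ' : Zb (j-1) c'.2 := by
          intro i h1i hij
          rw [hvo _ (by simp; omega), hvo _ (by simp)]
          exact hZ i h1i hij
        have := ih (by omega) hZ'
        rw [hva, hvo _ hab.symm, hvo _ hat.symm] at this
        calc Nf (tower (j-1)) (2 * c.2 (Sum.inl (j-1)) + c.2 (Sum.inr (j-1)) + 2)
            = Nf (tower (j-1)) (2 * (c.2 (Sum.inl (j-1)) + 1) + c.2 (Sum.inr (j-1))) := by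
              congr 1; ring
          _ ≤ c.2 (Sum.inl j) := this
      · -- q1 j loop
        obtain ⟨hq, hu, hq'⟩ := h
        rw [hq]
        intro _ hZ
        rw [hq'] at ih
        have hva := hv (Sum.inl (j-1))
        rw [hu, e_rule2_apply _ _ _ hab, if_pos rfl] at hva
        have hvb := hv (Sum.inr (j-1))
        rw [hu, e_rule2_apply _ _ _ hab, if_neg hab.symm, if_pos rfl] at hvb
        have hvo : ∀ x, x ≠ Sum.inl (j-1) → x ≠ Sum.inr (j-1) → c'.2 x = c.2 x := by
          intro x hx hx'
          have h1 := hv x; rw [hu, e_rule2_apply _ _ _ hab, if_neg hx, if_neg hx'] at h1; omega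
        have hZ' : Zb (j-1) c'.2 := by
          intro i h1i hij
          rw [hvo _ (by simp; omega) (by simp), hvo _ (by simp) (by simp; omega)]
          exact hZ i h1i hij
        have := ih (by omega) hZ'
        rw [hvo _ hat.symm hbt.symm] at this
        have harith : 2 * c'.2 (Sum.inl (j-1)) + c'.2 (Sum.inr (j-1))
            = 2 * c.2 (Sum.inl (j-1)) + c.2 (Sum.inr (j-1)) := by omega
        rwa [harith] at this
      · -- q1 j → q2 j, u = 0
        obtain ⟨hq, hu, hq'⟩ := h
        rw [hq]
        intro _ hZ
        rw [hq'] at ih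
        have hvo : ∀ x, c'.2 x = c.2 x := by
          intro x
          have h1 := hv x; rw [hu] at h1
          simp at h1; omega
        have hZ' : Zb (j-1) c'.2 := by
          intro i h1i hij
          rw [hvo, hvo]; exact hZ i h1i hij
        have := ih (by omega) hZ'
        rw [hvo, hvo, hvo] at this
        exact le_trans (Nf_antitone (by omega)) this
      · -- q2 loop
        obtain ⟨hq, hu, hq'⟩ := h
        rw [hq]
        intro _ hZ
        rw [hq'] at ih
        have hvb := hv (Sum.inr (j-1))
        rw [hu, e_rule4_apply _ _ _ hab.symm, if_pos rfl] at hvb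
        have hva := hv (Sum.inl (j-1))
        rw [hu, e_rule4_apply _ _ _ hab.symm, if_neg hab, if_pos rfl] at hva
        have hvo : ∀ x, x ≠ Sum.inl (j-1) → x ≠ Sum.inr (j-1) → c'.2 x = c.2 x := by
          intro x hx hx'
          have h1 := hv x; rw [hu, e_rule4_apply _ _ _ hab.symm, if_neg hx', if_neg hx] at h1; omega
        have hZ' : Zb (j-1) c'.2 := by
          intro i h1i hij
          rw [hvo _ (by simp; omega) (by simp), hvo _ (by simp) (by simp; omega)]
          exact hZ i h1i hij
        have := ih (by omega) hZ'
        rw [hvo _ hat.symm hbt.symm] at this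
        have harith : c'.2 (Sum.inl (j-1)) + c'.2 (Sum.inr (j-1))
            = c.2 (Sum.inl (j-1)) + c.2 (Sum.inr (j-1)) := by omega
        rwa [harith] at this
      · -- qloop j → qinit j, u = 0
        obtain ⟨hq, hu, hq'⟩ := h
        rw [hq]
        intro _ hZ
        rw [hq'] at ih
        have hvo : ∀ x, c'.2 x = c.2 x := by
          intro x
          have h1 := hv x; rw [hu] at h1
          simp at h1; omega
        have hZ' : Zb (j-1) c'.2 := by
          intro i h1i hij
          rw [hvo, hvo]; exact hZ i h1i hij
        have := (ih.2) (by omega) hZ'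
        rw [hvo, hvo, hvo] at this
        exact Or.inl this
      · -- qloop j → qinit (j-1), u = -e (inl j)
        obtain ⟨hq, hu, hq'⟩ := h
        rw [hq]
        intro _ hZ
        rw [hq'] at ih
        have hvt := hv (Sum.inl j)
        rw [hu, e_neg_apply, if_pos rfl] at hvt
        have hvo : ∀ x, x ≠ Sum.inl j → c'.2 x = c.2 x := by
          intro x hx
          have h1 := hv x; rw [hu, e_neg_apply, if_neg hx] at h1; omega
        refine Or.inr ⟨by omega, ?_⟩
        rcases Nat.eq_or_lt_of_le hj2 with hj | hj
        · -- j = 2 : target is qinit 1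
          have h21 : j - 1 = 1 := by omega
          rw [h21] at ih ⊢
          have := ih.1 rfl
          rw [hvo _ (by simp; omega)] at this
          have ht1 : tower 1 = 2 := by norm_num [tower]
          omega
        · -- j ≥ 3
          have hj3 : 3 ≤ j := hj
          have hZ' : Zb (j-1-1) c'.2 := by
            intro i h1i hij
            rw [hvo _ (by simp; omega), hvo _ (by simp)]
            exact hZ i h1i (by omega)
          have := ih.2 (by omega) hZ'
          have hz1 : c'.2 (Sum.inl (j-1-1)) = 0 := by
            rw [hvo _ (by simp; omega)]
            exact (hZ (j-1-1) (by omega) (by omega)).1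
          have hz2 : c'.2 (Sum.inr (j-1-1)) = 0 := by
            rw [hvo _ (by simp)]
            exact (hZ (j-1-1) (by omega) (by omega)).2
          rw [hz1, hz2] at this
          simp only [Nat.mul_zero, Nat.add_zero, Nat.zero_add] at this
          rw [Nf_two (tower_pos _)] at this
          have htj : (2:ℕ) ^ tower (j-1-1) = tower (j-1) := by
            have : j - 1 = (j - 1 - 1) + 1 := by omega
            rw [this]; rfl
          rw [htj] at this
          rw [hvo _ hat] at this
          exact this
  | @two c c₁ c₂ hs _ _ ih₁ ih₂ =>
    rcases hs with ⟨hf, _⟩ | ⟨hmem, hsum⟩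
    · simp [Bsys] at hf
    obtain ⟨j, hj2, hjk, hr⟩ := hmem
    simp only [Prod.mk.injEq] at hr
    obtain ⟨hq, hq₁, hq₂⟩ := hr
    rw [hq]
    intro _ hZ
    rw [hq₁] at ih₁
    rw [hq₂] at ih₂
    have hsum' : ∀ x, c.2 x = c₁.2 x + c₂.2 x := fun x => congrFun hsum x
    have hZ₁ : Zb (j-1) c₁.2 := by
      intro i h1i hij
      have h1 := hsum' (Sum.inl i); have h2 := hsum' (Sum.inr i)
      have := hZ i h1i hij; omega
    have hZ₂ : Zb (j-1) c₂.2 := by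
      intro i h1i hij
      have h1 := hsum' (Sum.inl i); have h2 := hsum' (Sum.inr i)
      have := hZ i h1i hij; omega
    set T := tower (j-1) with hT
    have key : ∀ w : Cnt → ℕ,
        (Nf T (2 * w (Sum.inl (j-1)) + w (Sum.inr (j-1)) + 2) ≤ w (Sum.inl j) ∨
          (1 ≤ w (Sum.inl j) ∧ T ≤ w (Sum.inl (j-1)))) →
        lf T (w (Sum.inl (j-1)) + w (Sum.inr (j-1))) ≤ w (Sum.inl j) := by
      intro w hw
      rcases hw with hw | ⟨hw1, hw2⟩
      · exact le_trans (lf_le_Nf _ _ _) hw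
      · rw [lf_of_ge (by omega)]; exact hw1
    have k₁ := key _ (ih₁ (by omega) hZ₁)
    have k₂ := key _ (ih₂ (by omega) hZ₂)
    have hN : Nf T (c.2 (Sum.inl (j-1)) + c.2 (Sum.inr (j-1))) ≤
        lf T (c₁.2 (Sum.inl (j-1)) + c₁.2 (Sum.inr (j-1))) +
        lf T (c₂.2 (Sum.inl (j-1)) + c₂.2 (Sum.inr (j-1))) := by
      have harith : c.2 (Sum.inl (j-1)) + c.2 (Sum.inr (j-1)) =
          (c₁.2 (Sum.inl (j-1)) + c₁.2 (Sum.inr (j-1))) +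
          (c₂.2 (Sum.inl (j-1)) + c₂.2 (Sum.inr (j-1))) := by
        have h1 := hsum' (Sum.inl (j-1)); have h2 := hsum' (Sum.inr (j-1)); omega
      rw [harith]
      exact Nf_le_add T _ _
    have := hsum' (Sum.inl j)
    omega

/-! ### Completeness: constructing deduction trees -/

/-- Configuration vector at level `j`: `a` on `d_{j-1}`, `b` on `d'_{j-1}`,
`t` on `d_j`, and `w` elsewhere. -/
def W (j a b t : ℕ) (w : Cnt → ℕ) : Cnt → ℕ := fun c =>
  if c = Sum.inl (j-1) then a else if c = Sum.inr (j-1) then b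
  else if c = Sum.inl j then t else w c

lemma ht_unary {k : ℕ} {q q' : BSt} {v v' : Cnt → ℕ} (u : Cnt → ℤ)
    (hm : (q, u, q') ∈ (Bsys k).Tu)
    (h : ∀ i, (v' i : ℤ) = v i + u i) (ht : HT (Bsys k) (q', v')) :
    HT (Bsys k) (q, v) :=
  HT.one (Or.inl ⟨u, hm, h⟩) ht

lemma ht_split {k : ℕ} {q q₁ q₂ : BSt} {v v₁ v₂ : Cnt → ℕ}
    (hm : (q, q₁, q₂) ∈ (Bsys k).Ts) (hv : v = v₁ + v₂)
    (h₁ : HT (Bsys k) (q₁, v₁)) (h₂ : HT (Bsys k) (q₂, v₂)) :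
    HT (Bsys k) (q, v) :=
  HT.two (Or.inr ⟨hm, hv⟩) h₁ h₂

section Steps

variable {k j : ℕ}

lemma step_init (hj : 2 ≤ j) (hk : j ≤ k) {a b t : ℕ} {w : Cnt → ℕ}
    (ht : HT (Bsys k) (.q1 j, W j (a+1) b t w)) :
    HT (Bsys k) (.qinit j, W j a b t w) := by
  apply ht_unary _ (Or.inr ⟨j, hj, hk, Or.inl rfl⟩) _ ht
  intro i
  simp only [W, e_apply]
  split_ifs with h1 h2 h3 <;> simp_all

lemma step_q1loop (hj : 2 ≤ j) (hk : j ≤ k) {a b t : ℕ} {w : Cnt → ℕ}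
    (ht : HT (Bsys k) (.q1 j, W j a (b+2) t w)) :
    HT (Bsys k) (.q1 j, W j (a+1) b t w) := by
  apply ht_unary _ (Or.inr ⟨j, hj, hk, Or.inr (Or.inl rfl)⟩) _ ht
  have hab : (Sum.inl (j-1) : Cnt) ≠ Sum.inr (j-1) := by simp
  intro i
  rw [e_rule2_apply _ _ _ hab]
  simp only [W]
  split_ifs with h1 h2 h3 <;> simp_all

lemma step_q12 (hj : 2 ≤ j) (hk : j ≤ k) {v : Cnt → ℕ}
    (ht : HT (Bsys k) (.q2 j, v)) :
    HT (Bsys k) (.q1 j, v) := by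
  apply ht_unary _ (Or.inr ⟨j, hj, hk, Or.inr (Or.inr (Or.inl rfl))⟩) _ ht
  intro i; simp

lemma step_q2loop (hj : 2 ≤ j) (hk : j ≤ k) {a b t : ℕ} {w : Cnt → ℕ}
    (ht : HT (Bsys k) (.q2 j, W j (a+1) b t w)) :
    HT (Bsys k) (.q2 j, W j a (b+1) t w) := by
  apply ht_unary _ (Or.inr ⟨j, hj, hk, Or.inr (Or.inr (Or.inr (Or.inl rfl)))⟩) _ ht
  have hba : (Sum.inr (j-1) : Cnt) ≠ Sum.inl (j-1) := by simp
  intro i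
  rw [e_rule4_apply _ _ _ hba]
  simp only [W]
  split_ifs with h1 h2 h3 <;> simp_all

lemma step_loopinit (hj : 2 ≤ j) (hk : j ≤ k) {v : Cnt → ℕ}
    (ht : HT (Bsys k) (.qinit j, v)) :
    HT (Bsys k) (.qloop j, v) := by
  apply ht_unary _ (Or.inr ⟨j, hj, hk, Or.inr (Or.inr (Or.inr (Or.inr (Or.inl rfl))))⟩) _ ht
  intro i; simp

lemma step_descend (hj : 2 ≤ j) (hk : j ≤ k) {a b t : ℕ} {w : Cnt → ℕ}
    (ht : HT (Bsys k) (.qinit (j-1), W j a b t w)) :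
    HT (Bsys k) (.qloop j, W j a b (t+1) w) := by
  apply ht_unary _ (Or.inr ⟨j, hj, hk, Or.inr (Or.inr (Or.inr (Or.inr (Or.inr rfl))))⟩) _ ht
  intro i
  rw [e_neg_apply]
  simp only [W]
  by_cases h1 : i = Sum.inl (j-1)
  · rw [if_pos h1, if_pos h1, if_neg (by rw [h1]; simp; omega)]; ring
  by_cases h2 : i = Sum.inr (j-1)
  · rw [if_neg h1, if_neg h1, if_pos h2, if_pos h2, if_neg (by rw [h2]; simp)]
    ring
  by_cases h3 : i = Sum.inl j
  · rw [if_neg h1, if_neg h1, if_neg h2, if_neg h2, if_pos h3, if_pos h3, if_pos h3]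
    push_cast; ring
  · rw [if_neg h1, if_neg h1, if_neg h2, if_neg h2, if_neg h3, if_neg h3, if_neg h3]
    ring

lemma W_sum {a₁ a₂ t₁ t₂ : ℕ} {w : Cnt → ℕ} :
    W j (a₁+a₂) 0 (t₁+t₂) w = W j a₁ 0 t₁ (fun _ => 0) + W j a₂ 0 t₂ w := by
  funext c
  simp only [W, Pi.add_apply]
  split_ifs <;> simp

lemma step_split (hj : 2 ≤ j) (hk : j ≤ k) {a₁ a₂ t₁ t₂ : ℕ} {w : Cnt → ℕ}
    (h₁ : HT (Bsys k) (.qloop j, W j a₁ 0 t₁ (fun _ => 0)))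
    (h₂ : HT (Bsys k) (.qloop j, W j a₂ 0 t₂ w)) :
    HT (Bsys k) (.q2 j, W j (a₁+a₂) 0 (t₁+t₂) w) :=
  ht_split ⟨j, hj, hk, rfl⟩ W_sum h₁ h₂

lemma q1_iters (hj : 2 ≤ j) (hk : j ≤ k) {t : ℕ} {w : Cnt → ℕ} :
    ∀ a b, HT (Bsys k) (.q1 j, W j 0 (b + 2*a) t w) → HT (Bsys k) (.q1 j, W j a b t w) := by
  intro a
  induction a with
  | zero => intro b ht; have h0 : b + 2*0 = b := by ring
            rwa [h0] at ht
  | succ a ih =>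
    intro b ht
    apply step_q1loop hj hk
    apply ih (b+2)
    have : b + 2 + 2 * a = b + 2 * (a + 1) := by ring
    rwa [this]

lemma q2_iters (hj : 2 ≤ j) (hk : j ≤ k) {t : ℕ} {w : Cnt → ℕ} :
    ∀ b a, HT (Bsys k) (.q2 j, W j (a+b) 0 t w) → HT (Bsys k) (.q2 j, W j a b t w) := by
  intro b
  induction b with
  | zero => intro a ht; have h0 : a + 0 = a := by ring
            rwa [h0] at ht
  | succ b ih =>
    intro a ht
    apply step_q2loop hj hk
    apply ih (a+1)
    have : a + 1 + b = a + (b + 1) := by ring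
    rwa [this]

/-- One full round at level `j`: increment, double, convert back, split. -/
lemma roundStep (hj : 2 ≤ j) (hk : j ≤ k) {m s₁ s₂ : ℕ} {w : Cnt → ℕ}
    (h₁ : HT (Bsys k) (.qloop j, W j (m+1) 0 s₁ (fun _ => 0)))
    (h₂ : HT (Bsys k) (.qloop j, W j (m+1) 0 s₂ w)) :
    HT (Bsys k) (.qinit j, W j m 0 (s₁+s₂) w) := by
  apply step_init hj hk
  apply q1_iters hj hk (m+1) 0
  apply step_q12 hj hk
  apply q2_iters hj hk (0 + 2*(m+1)) 0
  have h : (0:ℕ) + (0 + 2*(m+1)) = (m+1) + (m+1) := by ring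
  rw [h]
  exact step_split hj hk h₁ h₂

lemma Zb_W {m a b t : ℕ} {w : Cnt → ℕ} (hm : m ≤ j - 1) (h : Zb m w) :
    Zb m (W j a b t w) := by
  intro i h1 h2
  have e1 : W j a b t w (Sum.inl i) = w (Sum.inl i) := by
    simp only [W]
    rw [if_neg (by simp; omega), if_neg (by simp), if_neg (by simp; omega)]
  have e2 : W j a b t w (Sum.inr i) = w (Sum.inr i) := by
    simp only [W]
    rw [if_neg (by simp), if_neg (by simp; omega), if_neg (by simp)]
  rw [e1, e2]
  exact h i h1 h2

end Steps

lemma main_construct {k : ℕ} :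
    ∀ j, 1 ≤ j → j ≤ k → ∀ v : Cnt → ℕ, Zb j v → tower j ≤ v (Sum.inl j) →
      HT (Bsys k) (.qinit j, v) := by
  intro j
  induction j using Nat.strong_induction_on with
  | _ j IH =>
  intro hj1 hjk v hZ htow
  rcases eq_or_lt_of_le hj1 with hj1' | hj2
  · -- j = 1
    subst hj1'
    have h2 : 2 ≤ v (Sum.inl 1) := by
      have : tower 1 = 2 := by norm_num [tower]
      omega
    apply ht_unary (-(2 • e (Sum.inl 1))) (Or.inl rfl)
      (v' := Function.update v (Sum.inl 1) (v (Sum.inl 1) - 2))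
    · intro i
      rw [e_neg2_apply]
      by_cases h : i = Sum.inl 1
      · subst h; rw [Function.update_self, if_pos rfl]; omega
      · rw [Function.update_of_ne h, if_neg h]; omega
    · exact HT.leaf _
  · -- j ≥ 2
    have hj2 : 2 ≤ j := hj2
    have IH' : ∀ u : Cnt → ℕ, Zb (j-1) u → tower (j-1) ≤ u (Sum.inl (j-1)) →
        HT (Bsys k) (.qinit (j-1), u) :=
      fun u h1 h2 => IH (j-1) (by omega) (by omega) (by omega) u h1 h2
    have hZ' : Zb (j-1) v := fun i h1 h2 => hZ i h1 (by omega)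
    -- the rounds lemma
    have rounds : ∀ r, 1 ≤ r → ∀ m s (w : Cnt → ℕ), Zb (j-1) w → 2^r ≤ s →
        tower (j-1) ≤ m + r → HT (Bsys k) (.qinit j, W j m 0 s w) := by
      intro r hr
      induction r, hr using Nat.le_induction with
      | base =>
        intro m s w hZw hs hm
        rw [show s = 1 + (s - 1) from by omega]
        apply roundStep hj2 hjk
        · -- descend with budget 1
          rw [show (1:ℕ) = 0 + 1 from rfl]
          apply step_descend hj2 hjk
          apply IH'
          · exact Zb_W le_rfl (fun i h1 h2 => ⟨rfl, rfl⟩)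
          · rw [show W j (m+1) 0 0 (fun _ => 0) (Sum.inl (j-1)) = m + 1 from if_pos rfl]
            omega
        · -- descend with budget s - 1 ≥ 1
          rw [show s - 1 = (s - 2) + 1 from by omega]
          apply step_descend hj2 hjk
          apply IH'
          · exact Zb_W le_rfl hZw
          · rw [show W j (m+1) 0 (s-2) w (Sum.inl (j-1)) = m + 1 from if_pos rfl]
            omega
      | succ r hr ih =>
        intro m s w hZw hs hm
        have hp : 2 ^ (r+1) = 2^r + 2^r := by rw [pow_succ]; ring
        rw [show s = 2^r + (s - 2^r) from by omega]
        apply roundStep hj2 hjk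
        · apply step_loopinit hj2 hjk
          exact ih (m+1) (2^r) (fun _ => 0) (fun i h1 h2 => ⟨rfl, rfl⟩) le_rfl (by omega)
        · apply step_loopinit hj2 hjk
          exact ih (m+1) (s - 2^r) w hZw (by omega) (by omega)
    -- assemble
    have hva : v (Sum.inl (j-1)) = 0 := (hZ (j-1) (by omega) (by omega)).1
    have hvb : v (Sum.inr (j-1)) = 0 := (hZ (j-1) (by omega) (by omega)).2
    have hveq : v = W j 0 0 (v (Sum.inl j)) v := by
      funext c
      simp only [W]
      split_ifs with h1 h2 h3
      · rw [h1]; exact hva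
      · rw [h2]; exact hvb
      · rw [h3]
      · rfl
    rw [hveq]
    apply rounds (tower (j-1)) (tower_pos _) 0 (v (Sum.inl j)) v hZ'
    · have : tower j = 2 ^ tower (j-1) := by
        rw [show j = (j-1) + 1 from by omega]; rfl
      omega
    · omega

/-- For every `k ≥ 1` and vector `v₀` with `v₀ (d_i) = v₀ (d'_i) = 0` for
all `1 ≤ i < k`, the BVASS `B_k` has a `(qinit k, v₀)`-rooted
`{qleaf}`-leaf-covering deduction tree iff `v₀ (d_k) ≥ tower k`. -/
theorem Bk_correct (k : ℕ) (hk : 1 ≤ k) (v₀ : Cnt → ℕ)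
    (h0 : ∀ i, 1 ≤ i → i < k → v₀ (Sum.inl i) = 0 ∧ v₀ (Sum.inr i) = 0) :
    (∃ D : DTree BSt Cnt, IsDeduction (Bsys k) D ∧ D.root = (BSt.qinit k, v₀) ∧
      ∀ l ∈ D.leaves, l.1 = BSt.qleaf) ↔ tower k ≤ v₀ (Sum.inl k) := by
  rw [ht_iff_exists]
  constructor
  · intro h
    have hp : P (BSt.qinit k) v₀ := sound _ h
    rcases eq_or_lt_of_le hk with h1 | h2
    · rw [← h1] at hp ⊢
      have := hp.1 rfl
      have ht1 : tower 1 = 2 := by norm_num [tower]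
      omega
    · have h2k : 2 ≤ k := h2
      have hZ : Zb (k-1) v₀ := fun i a b => h0 i a (by omega)
      have hb := hp.2 h2k hZ
      rw [(h0 (k-1) (by omega) (by omega)).1, (h0 (k-1) (by omega) (by omega)).2] at hb
      have harg : 2 * 0 + 0 + 2 = 2 := by norm_num
      rw [harg, Nf_two (tower_pos _)] at hb
      have htk : tower k = 2 ^ tower (k-1) := by
        rw [show k = (k-1) + 1 from by omega]; rfl
      omega
  · intro h
    exact main_construct k hk le_rfl v₀ (fun i a b => h0 i a b) h
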